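/- There is an absolute constant c' > 0 with the following property. For every finite simple graph H on k ≥ 1 vertices there exist a constant C with 0 < C ≤ c'·k²·2^{k(k−1)/2} and an integer n₀ ≤ c'·k³·2^{k(k−1)/2} such that for every n > n₀ there exists a simple graph G on n vertices that is (H, C·log n)-universal: every set of at least C·log n vertices of G contains an induced subgraph isomorphic to H. -/

import Mathlib

open Finset

section counting
set_option linter.unusedSectionVars false
variable {I : Type} [Fintype I] [DecidableEq I]

def mrg (s : Finset I) (a b : I → Bool) : I → Bool := fun i => if i ∈ s then a i else b i

lemma mrg_mem {s : Finset I} {a b : I → Bool} {i : I} (h : i ∈ s) : mrg s a b i = a i := if_pos h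
lemma mrg_not_mem {s : Finset I} {a b : I → Bool} {i : I} (h : i ∉ s) : mrg s a b i = b i := if_neg h

lemma agree_count (s : Finset I) (σ : I → Bool) :
    (univ.filter (fun ω : I → Bool => ∀ i ∈ s, ω i = σ i)).card * 2 ^ s.card
      = 2 ^ (Fintype.card I) := by
  classical
  have h2 : (2:ℕ) ^ (Fintype.card I) = (univ : Finset (I → Bool)).card := by
    simp [Fintype.card_fun]
  have h3 : (2:ℕ) ^ s.card = (univ : Finset ((↥s) → Bool)).card := by
    simp [Fintype.card_fun]
  rw [h2, h3, ← Finset.card_product]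
  symm
  apply Finset.card_bij'
    (i := fun (ω : I → Bool) (_ : ω ∈ (univ : Finset (I → Bool))) =>
      ((mrg s σ ω, fun i => ω i.1) : (I → Bool) × ((↥s) → Bool)))
    (j := fun (p : (I → Bool) × ((↥s) → Bool))
        (_ : p ∈ (univ.filter (fun ω : I → Bool => ∀ i ∈ s, ω i = σ i)) ×ˢ univ) =>
      (fun i => if h : i ∈ s then p.2 ⟨i, h⟩ else p.1 i : I → Bool))
  · intro ω hω
    simp only [Finset.mem_product, Finset.mem_filter, Finset.mem_univ, true_and]
    exact ⟨fun i hi => mrg_mem hi, trivial⟩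
  · intro p hp; exact Finset.mem_univ _
  · intro ω hω
    ext i
    by_cases h : i ∈ s
    · simp [h]
    · simp [h, mrg_not_mem h]
  · intro p hp
    simp only [Finset.mem_product, Finset.mem_filter, Finset.mem_univ, true_and] at hp
    obtain ⟨h1, -⟩ := hp
    refine Prod.ext ?_ ?_
    · ext i
      dsimp only
      by_cases h : i ∈ s
      · rw [mrg_mem h]; exact (h1 i h).symm
      · rw [mrg_not_mem h]; rw [dif_neg h]
    · ext i
      dsimp only
      simp [i.2]


lemma indep_count (s : Finset I) (P Q : (I → Bool) → Prop) [DecidablePred P] [DecidablePred Q]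
    (hP : ∀ ω ω' : I → Bool, (∀ i ∈ s, ω i = ω' i) → P ω → P ω')
    (hQ : ∀ ω ω' : I → Bool, (∀ i ∉ s, ω i = ω' i) → Q ω → Q ω') :
    (univ.filter (fun ω => P ω ∧ Q ω)).card * 2 ^ (Fintype.card I)
      = (univ.filter P).card * (univ.filter Q).card := by
  have h2 : (2:ℕ) ^ (Fintype.card I) = (univ : Finset (I → Bool)).card := by
    simp [Fintype.card_fun]
  rw [h2, ← Finset.card_product, ← Finset.card_product]
  apply Finset.card_bij' (i := fun (p : (I → Bool) × (I → Bool))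
      (_ : p ∈ (univ.filter (fun ω => P ω ∧ Q ω)) ×ˢ univ) =>
      (mrg s p.1 p.2, mrg s p.2 p.1))
      (j := fun (p : (I → Bool) × (I → Bool)) (_ : p ∈ (univ.filter P) ×ˢ (univ.filter Q)) =>
      (mrg s p.1 p.2, mrg s p.2 p.1))
  · intro p hp
    simp only [Finset.mem_product, Finset.mem_filter, Finset.mem_univ, true_and] at hp ⊢
    obtain ⟨⟨hp1, hq1⟩, -⟩ := hp
    constructor
    · exact hP p.1 _ (fun i hi => (mrg_mem hi).symm) hp1
    · exact hQ p.1 _ (fun i hi => (mrg_not_mem hi).symm) hq1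
  · intro p hp
    simp only [Finset.mem_product, Finset.mem_filter, Finset.mem_univ, true_and] at hp ⊢
    obtain ⟨hp1, hq2⟩ := hp
    refine ⟨⟨hP p.1 _ (fun i hi => (mrg_mem hi).symm) hp1,
      hQ p.2 _ (fun i hi => (mrg_not_mem hi).symm) hq2⟩, trivial⟩
  · intro p hp
    refine Prod.ext ?_ ?_ <;> ext i <;> dsimp only <;> by_cases h : i ∈ s <;>
      simp [mrg, h]
  · intro p hp
    refine Prod.ext ?_ ?_ <;> ext i <;> dsimp only <;> by_cases h : i ∈ s <;>
      simp [mrg, h]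

lemma fail_count (s : Finset I) (σ : I → Bool) :
    (univ.filter (fun ω : I → Bool => ∃ i ∈ s, ω i ≠ σ i)).card * 2 ^ s.card
      = 2 ^ (Fintype.card I) * (2 ^ s.card - 1) := by
  classical
  have hA := agree_count s σ
  set A := (univ.filter (fun ω : I → Bool => ∀ i ∈ s, ω i = σ i)).card with hAdef
  have hcompl : (univ.filter (fun ω : I → Bool => ∃ i ∈ s, ω i ≠ σ i)).card
      = 2 ^ (Fintype.card I) - A := by
    have : (univ.filter (fun ω : I → Bool => ∃ i ∈ s, ω i ≠ σ i))
        = univ \ (univ.filter (fun ω : I → Bool => ∀ i ∈ s, ω i = σ i)) := by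
      ext ω
      simp only [Finset.mem_filter, Finset.mem_univ, true_and, Finset.mem_sdiff]
      push_neg
      tauto
    rw [this, Finset.card_sdiff_of_subset (Finset.filter_subset _ _)]
    congr 1
    simp [Fintype.card_fun]
  rw [hcompl, Nat.sub_mul, hA, Nat.mul_sub, mul_one]

lemma allfail_count {J : Type} [DecidableEq J] (B : Finset J) (s : J → Finset I)
    (σ : J → I → Bool) (b : ℕ)
    (hb : ∀ β ∈ B, (s β).card = b)
    (hdisj : ∀ β₁ ∈ B, ∀ β₂ ∈ B, β₁ ≠ β₂ → Disjoint (s β₁) (s β₂)) :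
    (univ.filter (fun ω : I → Bool => ∀ β ∈ B, ∃ i ∈ s β, ω i ≠ σ β i)).card * (2 ^ b) ^ B.card
      ≤ 2 ^ (Fintype.card I) * (2 ^ b - 1) ^ B.card := by
  classical
  induction B using Finset.induction_on with
  | empty => simp
  | @insert β₀ B hβ₀ ih =>
    have hb' : ∀ β ∈ B, (s β).card = b := fun β hβ => hb β (Finset.mem_insert_of_mem hβ)
    have hdisj' : ∀ β₁ ∈ B, ∀ β₂ ∈ B, β₁ ≠ β₂ → Disjoint (s β₁) (s β₂) :=
      fun β₁ h₁ β₂ h₂ h => hdisj β₁ (Finset.mem_insert_of_mem h₁) β₂ (Finset.mem_insert_of_mem h₂) h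
    have IH := ih hb' hdisj'
    set P : (I → Bool) → Prop := fun ω => ∃ i ∈ s β₀, ω i ≠ σ β₀ i with hPdef
    set Q : (I → Bool) → Prop := fun ω => ∀ β ∈ B, ∃ i ∈ s β, ω i ≠ σ β i with hQdef
    have hfilter : (univ.filter (fun ω : I → Bool => ∀ β ∈ insert β₀ B, ∃ i ∈ s β, ω i ≠ σ β i))
        = univ.filter (fun ω => P ω ∧ Q ω) := by
      apply Finset.filter_congr
      intro ω _
      simp [Finset.forall_mem_insert, hPdef, hQdef]
    have hP : ∀ ω ω' : I → Bool, (∀ i ∈ s β₀, ω i = ω' i) → P ω → P ω' := by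
      intro ω ω' hagree ⟨i, hi, hne⟩
      exact ⟨i, hi, by rw [← hagree i hi]; exact hne⟩
    have hQ : ∀ ω ω' : I → Bool, (∀ i ∉ s β₀, ω i = ω' i) → Q ω → Q ω' := by
      intro ω ω' hagree hq β hβ
      obtain ⟨i, hi, hne⟩ := hq β hβ
      have hnot : i ∉ s β₀ := by
        intro hmem
        exact (Finset.disjoint_left.mp (hdisj β (Finset.mem_insert_of_mem hβ) β₀
          (Finset.mem_insert_self _ _) (by rintro rfl; exact hβ₀ hβ)) hi) hmem
      exact ⟨i, hi, by rw [← hagree i hnot]; exact hne⟩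
    have key := indep_count (s β₀) P Q hP hQ
    have hPbound : (univ.filter P).card * 2 ^ b = 2 ^ (Fintype.card I) * (2 ^ b - 1) := by
      have := fail_count (s β₀) (σ β₀)
      rwa [hb β₀ (Finset.mem_insert_self _ _)] at this
    rw [hfilter, Finset.card_insert_of_notMem hβ₀]
    set X := (univ.filter (fun ω => P ω ∧ Q ω)).card
    set p := (univ.filter P).card
    set q := (univ.filter Q).card
    set T := (2:ℕ) ^ (Fintype.card I)
    have hT : 0 < T := Nat.pow_pos (by norm_num)
    apply Nat.le_of_mul_le_mul_right _ hT
    calc X * (2 ^ b) ^ (B.card + 1) * T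
        = (X * T) * ((2 ^ b) * (2 ^ b) ^ B.card) := by ring
      _ = (p * 2 ^ b) * (q * (2 ^ b) ^ B.card) := by rw [key]; ring
      _ ≤ (T * (2 ^ b - 1)) * (T * (2 ^ b - 1) ^ B.card) := by
          exact Nat.mul_le_mul (le_of_eq hPbound) IH
      _ = T * (2 ^ b - 1) ^ (B.card + 1) * T := by ring

end counting

section construction

variable {n k t : ℕ} [NeZero t]

/-- the graph determined by a boolean function on ordered pairs -/
def grOf (n : ℕ) (ω : Fin n × Fin n → Bool) : SimpleGraph (Fin n) where
  Adj x y := x ≠ y ∧ ω (min x y, max x y) = true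
  symm := by
    refine ⟨fun x y ⟨h1, h2⟩ => ?_⟩
    exact ⟨h1.symm, by rwa [min_comm, max_comm]⟩
  loopless := ⟨fun x ⟨h, _⟩ => h rfl⟩

/-- position of the `j`-th vertex of block `β` inside a set of size `k*t` -/
def posF (k : ℕ) (β : ZMod t × ZMod t) (j : Fin k) : Fin (k * t) :=
  ⟨j.val * t + (β.1 + (j.val : ZMod t) * β.2).val, by
    have h1 : (β.1 + (j.val : ZMod t) * β.2).val < t := ZMod.val_lt _
    have h2 : j.val + 1 ≤ k := j.2
    calc j.val * t + (β.1 + (j.val : ZMod t) * β.2).val < j.val * t + t := by omega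
      _ = (j.val + 1) * t := by ring
      _ ≤ k * t := Nat.mul_le_mul_right t h2⟩

lemma posF_lt (β : ZMod t × ZMod t) {j j' : Fin k} (h : j < j') :
    posF k β j < posF k β j' := by
  have h1 : (β.1 + (j.val : ZMod t) * β.2).val < t := ZMod.val_lt _
  have h2 : j.val < j'.val := h
  show j.val * t + _ < j'.val * t + _
  have hh2 : j.val + 1 ≤ j'.val := h2
  have h3 : j.val * t + t ≤ j'.val * t := by
    have := Nat.mul_le_mul_right t hh2
    rwa [Nat.succ_mul] at this
  omega

lemma posF_inj {β β' : ZMod t × ZMod t} {j j' : Fin k}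
    (h : posF k β j = posF k β' j') :
    j = j' ∧ (β.1 + (j.val : ZMod t) * β.2) = (β'.1 + (j'.val : ZMod t) * β'.2) := by
  have hval : j.val * t + (β.1 + (j.val : ZMod t) * β.2).val
      = j'.val * t + (β'.1 + (j'.val : ZMod t) * β'.2).val := congrArg Fin.val h
  have h1 : (β.1 + (j.val : ZMod t) * β.2).val < t := ZMod.val_lt _
  have h2 : (β'.1 + (j'.val : ZMod t) * β'.2).val < t := ZMod.val_lt _
  have hj : j.val = j'.val := by
    rcases Nat.lt_trichotomy j.val j'.val with hlt | heq | hgt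
    · exfalso
      have h3 : j.val * t + t ≤ j'.val * t := by
        have := Nat.mul_le_mul_right t (hlt : j.val + 1 ≤ j'.val)
        rwa [Nat.succ_mul] at this
      omega
    · exact heq
    · exfalso
      have h3 : j'.val * t + t ≤ j.val * t := by
        have := Nat.mul_le_mul_right t (hgt : j'.val + 1 ≤ j.val)
        rwa [Nat.succ_mul] at this
      omega
  have hmul : j.val * t = j'.val * t := by rw [hj]
  have hr := ZMod.val_injective t (show
      (β.1 + (j.val : ZMod t) * β.2).val = (β'.1 + (j'.val : ZMod t) * β'.2).val by omega)
  exact ⟨Fin.ext hj, hr⟩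

variable (W : Finset (Fin n)) (hW : W.card = k * t)

/-- the `j`-th vertex of block `β` inside `W` -/
def vrtW (β : ZMod t × ZMod t) (j : Fin k) : Fin n :=
  W.orderEmbOfFin hW (posF k β j)

lemma vrtW_mem (β : ZMod t × ZMod t) (j : Fin k) : vrtW W hW β j ∈ W :=
  W.orderEmbOfFin_mem hW _

lemma vrtW_lt (β : ZMod t × ZMod t) {j j' : Fin k} (h : j < j') :
    vrtW W hW β j < vrtW W hW β j' :=
  (W.orderEmbOfFin hW).strictMono (posF_lt β h)

lemma vrtW_inj {β β' : ZMod t × ZMod t} {j j' : Fin k}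
    (h : vrtW W hW β j = vrtW W hW β' j') :
    j = j' ∧ (β.1 + (j.val : ZMod t) * β.2) = (β'.1 + (j'.val : ZMod t) * β'.2) :=
  posF_inj ((W.orderEmbOfFin hW).injective h)


lemma card_ltPairs (k : ℕ) :
    ((univ : Finset (Fin k × Fin k)).filter (fun p => p.1 < p.2)).card = k * (k - 1) / 2 := by
  classical
  set A := ((univ : Finset (Fin k × Fin k)).filter (fun p => p.1 < p.2)) with hA
  set B := ((univ : Finset (Fin k × Fin k)).filter (fun p => p.2 < p.1)) with hB
  set D := ((univ : Finset (Fin k × Fin k)).filter (fun p => p.1 = p.2)) with hD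
  have hAB : A.card = B.card := by
    apply Finset.card_bij' (i := fun p (_ : p ∈ A) => (p.2, p.1)) (j := fun p (_ : p ∈ B) => (p.2, p.1))
    · intro p hp; simp only [hA, hB, Finset.mem_filter, Finset.mem_univ, true_and] at *; exact hp
    · intro p hp; simp only [hA, hB, Finset.mem_filter, Finset.mem_univ, true_and] at *; exact hp
    · intro p hp; rfl
    · intro p hp; rfl
  have hD_card : D.card = k := by
    have : D = (univ : Finset (Fin k)).image (fun i => (i, i)) := by
      ext p
      simp only [hD, Finset.mem_filter, Finset.mem_univ, true_and, Finset.mem_image]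
      constructor
      · intro h; exact ⟨p.1, Prod.ext_iff.mpr ⟨rfl, h⟩⟩
      · rintro ⟨i, -, rfl⟩; rfl
    rw [this, Finset.card_image_of_injective _ (fun a b h => (Prod.ext_iff.mp h).1),
      Finset.card_univ, Fintype.card_fin]
  have hsplit : A.card + (B.card + D.card) = k * k := by
    have h1 : A.card + ((univ : Finset (Fin k × Fin k)).filter (fun p => ¬ p.1 < p.2)).card
        = (univ : Finset (Fin k × Fin k)).card :=
      Finset.card_filter_add_card_filter_not _
    have h2 : ((univ : Finset (Fin k × Fin k)).filter (fun p => ¬ p.1 < p.2))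
        = B ∪ D := by
      ext p
      simp only [hB, hD, Finset.mem_filter, Finset.mem_univ, true_and, Finset.mem_union, not_lt]
      constructor
      · intro h; rcases lt_or_eq_of_le h with h' | h'
        · exact Or.inl h'
        · exact Or.inr h'.symm
      · intro h; rcases h with h | h
        · exact le_of_lt h
        · exact le_of_eq h.symm
    have h3 : Disjoint B D := by
      rw [Finset.disjoint_left]
      intro p hp hp'
      simp only [hB, hD, Finset.mem_filter] at hp hp'
      exact absurd hp'.2 (ne_of_gt hp.2)
    rw [h2, Finset.card_union_of_disjoint h3] at h1
    rw [h1]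
    simp [Fintype.card_prod]
  have h2A : A.card * 2 = k * (k - 1) := by
    have hkk : k * (k - 1) = k * k - k := by
      cases k with
      | zero => simp
      | succ m => simp only [Nat.succ_sub_one]; ring_nf; omega
    omega
  omega

variable (V : Type) [Fintype V] (H : SimpleGraph V) (e : V ≃ Fin k)

open Classical in
/-- support of block β : the coordinates of its pairs -/
noncomputable def suppW (W : Finset (Fin n)) (hW : W.card = k * t) (β : ZMod t × ZMod t) :
    Finset (Fin n × Fin n) :=
  ((univ : Finset (Fin k × Fin k)).filter (fun p => p.1 < p.2)).image
    (fun p => (vrtW W hW β p.1, vrtW W hW β p.2))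

open Classical in
noncomputable def sigW (W : Finset (Fin n)) (hW : W.card = k * t) (β : ZMod t × ZMod t) :
    Fin n × Fin n → Bool := fun c =>
  decide (∃ p : Fin k × Fin k, p.1 < p.2 ∧ c = (vrtW W hW β p.1, vrtW W hW β p.2)
    ∧ H.Adj (e.symm p.1) (e.symm p.2))

lemma suppW_card (W : Finset (Fin n)) (hW : W.card = k * t) (β : ZMod t × ZMod t) :
    (suppW W hW β).card = k * (k - 1) / 2 := by
  rw [suppW, Finset.card_image_of_injOn, card_ltPairs]
  intro p hp q hq hpq
  rw [Prod.ext_iff] at hpq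
  have h1 := (vrtW_inj W hW hpq.1).1
  have h2 := (vrtW_inj W hW hpq.2).1
  exact Prod.ext h1 h2

lemma suppW_disjoint [Fact t.Prime] (hkt : k < t) (W : Finset (Fin n)) (hW : W.card = k * t)
    {β β' : ZMod t × ZMod t} (hne : β ≠ β') :
    Disjoint (suppW W hW β) (suppW W hW β') := by
  rw [Finset.disjoint_left]
  rintro c hc hc'
  simp only [suppW, Finset.mem_image, Finset.mem_filter, Finset.mem_univ, true_and] at hc hc'
  obtain ⟨p, hp, hcp⟩ := hc
  obtain ⟨q, hq, hcq⟩ := hc'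
  rw [← hcq] at hcp
  rw [Prod.ext_iff] at hcp
  obtain ⟨hj1, he1⟩ := vrtW_inj W hW hcp.1
  obtain ⟨hj2, he2⟩ := vrtW_inj W hW hcp.2
  apply hne
  -- from the two residue equations derive β = β'
  have hq1 : (q.1 : Fin k) = p.1 := hj1.symm
  have hq2 : (q.2 : Fin k) = p.2 := hj2.symm
  rw [← hq1] at he1
  rw [← hq2] at he2
  have hsub : (((q.1 : Fin k).val : ZMod t) - ((q.2 : Fin k).val : ZMod t)) * (β.2 - β'.2) = 0 := by
    linear_combination he1 - he2
  have hne12 : ((q.1 : Fin k).val : ZMod t) ≠ ((q.2 : Fin k).val : ZMod t) := by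
    intro hcast
    have h1 := ZMod.val_cast_of_lt (lt_trans (q.1 : Fin k).2 hkt)
    have h2 := ZMod.val_cast_of_lt (lt_trans (q.2 : Fin k).2 hkt)
    have : (q.1 : Fin k).val = (q.2 : Fin k).val := by rw [← h1, ← h2, hcast]
    exact absurd (Fin.ext this) (ne_of_lt hq)
  rcases mul_eq_zero.mp hsub with h | h
  · exact absurd (sub_eq_zero.mp h) hne12
  · have hb2 : β.2 = β'.2 := sub_eq_zero.mp h
    have hb1 : β.1 = β'.1 := by
      rw [hb2] at he1
      exact add_right_cancel he1
    exact Prod.ext hb1 hb2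

set_option maxHeartbeats 1000000 in
lemma good_block (W : Finset (Fin n)) (hW : W.card = k * t) (β : ZMod t × ZMod t)
    (ω : Fin n × Fin n → Bool)
    (hagree : ∀ i ∈ suppW W hW β, ω i = sigW V H e W hW β i) :
    ∃ f : H ↪g grOf n ω, ∀ v, f v ∈ W := by
  classical
  have key : ∀ j j' : Fin k, j < j' →
      ((grOf n ω).Adj (vrtW W hW β j) (vrtW W hW β j') ↔ H.Adj (e.symm j) (e.symm j')) := by
    intro j j' hjj
    have hlt : vrtW W hW β j < vrtW W hW β j' := vrtW_lt W hW β hjj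
    have hmem : ((vrtW W hW β j, vrtW W hW β j') : Fin n × Fin n) ∈ suppW W hW β := by
      rw [suppW]
      exact Finset.mem_image_of_mem
        (fun p : Fin k × Fin k => (vrtW W hW β p.1, vrtW W hW β p.2)) (Finset.mem_filter.mpr ⟨Finset.mem_univ ((j, j') : Fin k × Fin k), hjj⟩)
    have hω := hagree _ hmem
    have hsig : (sigW V H e W hW β (vrtW W hW β j, vrtW W hW β j') = true)
        ↔ H.Adj (e.symm j) (e.symm j') := by
      rw [sigW, decide_eq_true_iff]
      constructor
      · rintro ⟨p, hp, hpc, hadj⟩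
        rw [Prod.ext_iff] at hpc
        have h1 := (vrtW_inj W hW hpc.1).1
        have h2 := (vrtW_inj W hW hpc.2).1
        rw [← h1, ← h2] at hadj
        exact hadj
      · intro hadj
        exact ⟨(j, j'), hjj, rfl, hadj⟩
    have hadj_def : (grOf n ω).Adj (vrtW W hW β j) (vrtW W hW β j')
        ↔ (vrtW W hW β j ≠ vrtW W hW β j'
          ∧ ω (min (vrtW W hW β j) (vrtW W hW β j'), max (vrtW W hW β j) (vrtW W hW β j')) = true) :=
      Iff.rfl
    rw [hadj_def, min_eq_left hlt.le, max_eq_right hlt.le, hω, hsig]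
    simp only [ne_eq, hlt.ne, not_false_eq_true, true_and]
  refine ⟨⟨⟨fun v => vrtW W hW β (e v), ?_⟩, ?_⟩, fun v => vrtW_mem W hW β (e v)⟩
  · intro a b hab
    have := (vrtW_inj W hW hab).1
    exact e.injective this
  · intro a b
    show (grOf n ω).Adj (vrtW W hW β (e a)) (vrtW W hW β (e b)) ↔ H.Adj a b
    rcases lt_trichotomy (e a) (e b) with h | h | h
    · rw [key _ _ h]
      simp
    · have : a = b := e.injective h
      subst this
      exact iff_of_false (grOf n ω).irrefl H.irrefl
    · rw [SimpleGraph.adj_comm, key _ _ h, SimpleGraph.adj_comm]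
      simp

end construction

lemma two_mul_pow_le (M : ℕ) (hM : 1 ≤ M) : 2 * M ^ (M + 1) ≤ (M + 1) ^ (M + 1) := by
  have hMR : (0:ℝ) < (M:ℝ) := by exact_mod_cast hM
  have hbern : (1:ℝ) + (M:ℕ) * (1 / (M:ℝ)) ≤ (1 + 1 / (M:ℝ)) ^ (M:ℕ) :=
    one_add_mul_le_pow (by nlinarith [one_div_nonneg.mpr (le_of_lt hMR)]) M
  have h2 : (2:ℝ) ≤ (1 + 1 / (M:ℝ)) ^ (M:ℕ) := by
    have : (M:ℝ) * (1 / (M:ℝ)) = 1 := by field_simp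
    rw [this] at hbern
    linarith
  have hreal : (2:ℝ) * (M:ℝ) ^ (M + 1) ≤ ((M:ℝ) + 1) ^ (M + 1) := by
    have hstep : (2:ℝ) * (M:ℝ) ^ (M:ℕ) ≤ ((M:ℝ) + 1) ^ (M:ℕ) := by
      have hmp : (0:ℝ) ≤ (M:ℝ) ^ (M:ℕ) := by positivity
      have := mul_le_mul_of_nonneg_right h2 hmp
      calc (2:ℝ) * (M:ℝ) ^ (M:ℕ) ≤ (1 + 1 / (M:ℝ)) ^ (M:ℕ) * (M:ℝ) ^ (M:ℕ) := this
        _ = ((1 + 1 / (M:ℝ)) * (M:ℝ)) ^ (M:ℕ) := by rw [mul_pow]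
        _ = ((M:ℝ) + 1) ^ (M:ℕ) := by
            congr 1
            field_simp
    calc (2:ℝ) * (M:ℝ) ^ (M + 1) = (2 * (M:ℝ) ^ (M:ℕ)) * (M:ℝ) := by ring
      _ ≤ (((M:ℝ) + 1) ^ (M:ℕ)) * ((M:ℝ) + 1) := by
          apply mul_le_mul hstep (by linarith) (by positivity)
          positivity
      _ = ((M:ℝ) + 1) ^ (M + 1) := by ring
  exact_mod_cast hreal

lemma gain_lemma (M : ℕ) (hM : 1 ≤ M) (a E : ℕ) (hE : a * (M + 1) ≤ E) :
    2 ^ a * M ^ E ≤ (M + 1) ^ E := by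
  have hchunk : ∀ a : ℕ, 2 ^ a * M ^ (a * (M + 1)) ≤ (M + 1) ^ (a * (M + 1)) := by
    intro a
    induction a with
    | zero => simp
    | succ c ih =>
      have h1 := two_mul_pow_le M hM
      calc 2 ^ (c+1) * M ^ ((c+1) * (M+1))
          = (2 * M ^ (M+1)) * (2 ^ c * M ^ (c * (M+1))) := by ring
        _ ≤ ((M+1) ^ (M+1)) * ((M+1) ^ (c * (M+1))) := Nat.mul_le_mul h1 ih
        _ = (M + 1) ^ ((c+1) * (M+1)) := by rw [← pow_add]; ring_nf
  have hsplit : E = a * (M + 1) + (E - a * (M + 1)) := by omega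
  rw [hsplit, pow_add, pow_add, ← mul_assoc]
  exact Nat.mul_le_mul (hchunk a) (Nat.pow_le_pow_left (by omega) _)

lemma union_numeric (b L m tt cN : ℕ) (hb : 1 ≤ b) (hcN : cN ≤ 2 ^ (L * m))
    (hE : (L * m + 1) * 2 ^ b ≤ tt) :
    cN * (2 ^ b - 1) ^ tt < (2 ^ b) ^ tt := by
  set M := 2 ^ b - 1 with hM
  have hM1 : 1 ≤ M := by
    have : (2:ℕ) ^ 1 ≤ 2 ^ b := Nat.pow_le_pow_right (by norm_num) hb
    omega
  have hMp : M + 1 = 2 ^ b := by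
    have : (1:ℕ) ≤ 2 ^ b := Nat.one_le_two_pow
    omega
  have := gain_lemma M hM1 (L * m + 1) tt (by rw [hMp]; exact hE)
  calc cN * M ^ tt ≤ 2 ^ (L * m) * M ^ tt := Nat.mul_le_mul_right _ hcN
    _ < 2 ^ (L * m + 1) * M ^ tt := by
        have hMpos : 0 < M ^ tt := Nat.pow_pos hM1
        have : (2:ℕ) ^ (L * m) < 2 ^ (L * m + 1) := Nat.pow_lt_pow_right (by norm_num) (by omega)
        exact Nat.mul_lt_mul_of_lt_of_le this (le_refl _) hMpos
    _ ≤ (M + 1) ^ tt := this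
    _ = (2 ^ b) ^ tt := by rw [hMp]


set_option maxHeartbeats 2000000 in
lemma construction_main (n k t : ℕ) [NeZero t] [Fact t.Prime] (hkt : k < t)
    (V : Type) [Fintype V] (H : SimpleGraph V) (e : V ≃ Fin k)
    (hk : 2 ≤ k) (L : ℕ) (hnL : n ≤ 2 ^ L)
    (htb : (L * (k * t) + 1) * 2 ^ (k * (k - 1) / 2) ≤ t * t) :
    ∃ G : SimpleGraph (Fin n), ∀ W : Finset (Fin n), W.card = k * t →
      ∃ f : H ↪g G, ∀ v, f v ∈ W := by
  set b := k * (k - 1) / 2 with hb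
  set m := k * t with hm
  have hb1 : 1 ≤ b := by
    rw [hb]
    have h2 : 2 ≤ k * (k - 1) := by
      have : 1 ≤ k - 1 := by omega
      calc 2 = 2 * 1 := by norm_num
        _ ≤ k * (k - 1) := Nat.mul_le_mul hk this
    omega
  have hex : ∃ ω : Fin n × Fin n → Bool, ∀ W : Finset (Fin n), ∀ hW : W.card = m,
      ∃ β : ZMod t × ZMod t, ∀ i ∈ suppW W hW β, ω i = sigW V H e W hW β i := by
    by_contra hcon
    push_neg at hcon
    set F : Finset (Fin n) → Finset (Fin n × Fin n → Bool) := fun W =>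
      if hW : W.card = m then
        univ.filter (fun ω => ∀ β ∈ (univ : Finset (ZMod t × ZMod t)),
          ∃ i ∈ suppW W hW β, ω i ≠ sigW V H e W hW β i)
      else ∅ with hF
    have hsub : (univ : Finset (Fin n × Fin n → Bool)) ⊆
        (Finset.powersetCard m (univ : Finset (Fin n))).biUnion F := by
      intro ω _
      obtain ⟨W, hW, hfail⟩ := hcon ω
      refine Finset.mem_biUnion.mpr ⟨W, ?_, ?_⟩
      · exact Finset.mem_powersetCard.mpr ⟨Finset.subset_univ _, hW⟩
      · rw [hF]; dsimp only; rw [dif_pos hW]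
        refine Finset.mem_filter.mpr ⟨Finset.mem_univ _, fun β _ => ?_⟩
        obtain ⟨i, hi, hne⟩ := hfail β
        exact ⟨i, hi, hne⟩
    have hcardone : ∀ W ∈ Finset.powersetCard m (univ : Finset (Fin n)),
        (F W).card * (2 ^ b) ^ (t * t)
          ≤ 2 ^ (Fintype.card (Fin n × Fin n)) * (2 ^ b - 1) ^ (t * t) := by
      intro W hWmem
      have hW : W.card = m := (Finset.mem_powersetCard.mp hWmem).2
      rw [hF]; dsimp only; rw [dif_pos hW]
      have huniv_card : (univ : Finset (ZMod t × ZMod t)).card = t * t := by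
        simp [Finset.card_univ, ZMod.card]
      have := allfail_count (univ : Finset (ZMod t × ZMod t)) (suppW W hW)
        (sigW V H e W hW) b
        (fun β _ => suppW_card W hW β)
        (fun β₁ _ β₂ _ hne => suppW_disjoint hkt W hW hne)
      rw [huniv_card] at this
      convert this using 4
    have hchoose : (Finset.powersetCard m (univ : Finset (Fin n))).card ≤ 2 ^ (L * m) := by
      rw [Finset.card_powersetCard, Finset.card_univ, Fintype.card_fin]
      calc n.choose m ≤ n ^ m := Nat.choose_le_pow n m
        _ ≤ (2 ^ L) ^ m := Nat.pow_le_pow_left hnL m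
        _ = 2 ^ (L * m) := by rw [← pow_mul]
    have hkey := union_numeric b L m (t * t)
      ((Finset.powersetCard m (univ : Finset (Fin n))).card) hb1 hchoose htb
    have hΩ : (univ : Finset (Fin n × Fin n → Bool)).card
        = 2 ^ (Fintype.card (Fin n × Fin n)) := by
      simp [Fintype.card_fun]
    have htotal : 2 ^ (Fintype.card (Fin n × Fin n)) * (2 ^ b) ^ (t * t)
        ≤ (Finset.powersetCard m (univ : Finset (Fin n))).card
          * (2 ^ (Fintype.card (Fin n × Fin n)) * (2 ^ b - 1) ^ (t * t)) := by
      calc 2 ^ (Fintype.card (Fin n × Fin n)) * (2 ^ b) ^ (t * t)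
          = (univ : Finset (Fin n × Fin n → Bool)).card * (2 ^ b) ^ (t * t) := by rw [hΩ]
        _ ≤ ((Finset.powersetCard m (univ : Finset (Fin n))).biUnion F).card
              * (2 ^ b) ^ (t * t) :=
            Nat.mul_le_mul_right _ (Finset.card_le_card hsub)
        _ ≤ (∑ W ∈ Finset.powersetCard m (univ : Finset (Fin n)), (F W).card)
              * (2 ^ b) ^ (t * t) :=
            Nat.mul_le_mul_right _ (Finset.card_biUnion_le)
        _ = ∑ W ∈ Finset.powersetCard m (univ : Finset (Fin n)),
              (F W).card * (2 ^ b) ^ (t * t) := Finset.sum_mul _ _ _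
        _ ≤ ∑ _W ∈ Finset.powersetCard m (univ : Finset (Fin n)),
              2 ^ (Fintype.card (Fin n × Fin n)) * (2 ^ b - 1) ^ (t * t) :=
            Finset.sum_le_sum hcardone
        _ = (Finset.powersetCard m (univ : Finset (Fin n))).card
              * (2 ^ (Fintype.card (Fin n × Fin n)) * (2 ^ b - 1) ^ (t * t)) := by
            rw [Finset.sum_const, smul_eq_mul]
    have hfin : 2 ^ (Fintype.card (Fin n × Fin n)) * (2 ^ b) ^ (t * t)
        < 2 ^ (Fintype.card (Fin n × Fin n)) * (2 ^ b) ^ (t * t) := by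
      calc 2 ^ (Fintype.card (Fin n × Fin n)) * (2 ^ b) ^ (t * t)
          ≤ (Finset.powersetCard m (univ : Finset (Fin n))).card
            * (2 ^ (Fintype.card (Fin n × Fin n)) * (2 ^ b - 1) ^ (t * t)) := htotal
        _ = 2 ^ (Fintype.card (Fin n × Fin n))
            * ((Finset.powersetCard m (univ : Finset (Fin n))).card
              * (2 ^ b - 1) ^ (t * t)) := by ring
        _ < 2 ^ (Fintype.card (Fin n × Fin n)) * (2 ^ b) ^ (t * t) :=
            mul_lt_mul_of_pos_left hkey (Nat.pow_pos (by norm_num))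
    exact lt_irrefl _ hfin
  obtain ⟨ω, hω⟩ := hex
  refine ⟨grOf n ω, fun W hW => ?_⟩
  obtain ⟨β, hβ⟩ := hω W hW
  exact good_block V H e W hW β ω hβ

lemma size_le_log (n : ℕ) (hn : 2 ≤ n) : (Nat.size n : ℝ) ≤ 4 * Real.log n := by
  set L := Nat.size n with hLdef
  have hL1 : 1 ≤ L := Nat.size_pos.mpr (by omega)
  have h2L : 2 ^ (L - 1) ≤ n := Nat.lt_size.mp (by omega)
  have hcast : ((2:ℝ)) ^ (L - 1) ≤ (n:ℝ) := by exact_mod_cast h2L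
  have hlog1 : ((L - 1 : ℕ) : ℝ) * Real.log 2 ≤ Real.log n := by
    have := Real.log_le_log (by positivity) hcast
    rwa [Real.log_pow] at this
  have hlog2 : (0.6931471803 : ℝ) < Real.log 2 := Real.log_two_gt_d9
  have hlogn : Real.log 2 ≤ Real.log n := by
    apply Real.log_le_log (by norm_num)
    exact_mod_cast hn
  have hLcast : ((L - 1 : ℕ) : ℝ) = (L : ℝ) - 1 := by
    push_cast [Nat.cast_sub hL1]
    ring
  rw [hLcast] at hlog1
  have hLpos : (0:ℝ) ≤ (L:ℝ) := Nat.cast_nonneg _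
  nlinarith [hlog1, hlog2, hlogn, hLpos]

/-- There is an absolute constant `c' > 0` such that: for every finite simple graph `H`
on `k ≥ 1` vertices there exist `C` with `0 < C ≤ c'·k²·2^{k(k-1)/2}` and
`n₀ ≤ c'·k³·2^{k(k-1)/2}` such that for every `n > n₀` there is a graph `G` on `n`
vertices that is `(H, C·log n)`-universal: every set `W` of at least `C·log n` vertices
of `G` contains an induced subgraph isomorphic to `H` (i.e. there is a graph embedding
of `H` into `G` whose image lies in `W`). -/
theorem stmt4 :
    ∃ c' : ℝ, 0 < c' ∧
      ∀ (k : ℕ), 1 ≤ k →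
        ∀ (V : Type) [Fintype V], ∀ (H : SimpleGraph V), Fintype.card V = k →
          ∃ (C : ℝ) (n₀ : ℕ),
            0 < C ∧ C ≤ c' * (k : ℝ) ^ 2 * 2 ^ (k * (k - 1) / 2) ∧
            (n₀ : ℝ) ≤ c' * (k : ℝ) ^ 3 * 2 ^ (k * (k - 1) / 2) ∧
            ∀ n : ℕ, n₀ < n →
              ∃ G : SimpleGraph (Fin n),
                ∀ W : Finset (Fin n), C * Real.log n ≤ (W.card : ℝ) →
                  ∃ f : H ↪g G, ∀ v, f v ∈ W := by
  classical
  refine ⟨100, by norm_num, ?_⟩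
  intro k hk V _ H hcard
  have hk1 : (1:ℝ) ≤ (k:ℝ) := by exact_mod_cast hk
  have hk3 : (1:ℝ) ≤ (k:ℝ) ^ 3 := one_le_pow₀ hk1
  have hk2 : (1:ℝ) ≤ (k:ℝ) ^ 2 := one_le_pow₀ hk1
  have h2b : (1:ℝ) ≤ (2:ℝ) ^ (k * (k - 1) / 2) := one_le_pow₀ (by norm_num)
  refine ⟨100 * (k : ℝ) ^ 2 * 2 ^ (k * (k - 1) / 2), 1, by positivity, le_refl _, ?_, ?_⟩
  · nlinarith [hk3, h2b]
  intro n hn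
  have hn2 : 2 ≤ n := hn
  have hlogn_pos : 0 < Real.log n := Real.log_pos (by exact_mod_cast hn)
  rcases eq_or_lt_of_le hk with hk1' | hk2'
  · -- k = 1
    refine ⟨⊥, ?_⟩
    intro W hW
    have hWpos : 0 < W.card := by
      have hpos : (0:ℝ) < 100 * (k:ℝ)^2 * 2^(k*(k-1)/2) * Real.log n :=
        mul_pos (by positivity) hlogn_pos
      have : (0:ℝ) < (W.card:ℝ) := lt_of_lt_of_le hpos hW
      exact_mod_cast this
    obtain ⟨w, hw⟩ := Finset.card_pos.mp hWpos
    have hsing : Subsingleton V := by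
      apply Fintype.card_le_one_iff_subsingleton.mp
      omega
    refine ⟨⟨⟨fun _ => w, fun a b _ => Subsingleton.elim a b⟩, ?_⟩, fun v => hw⟩
    intro a b
    constructor
    · intro h
      simp only [SimpleGraph.bot_adj] at h
    · intro h
      exfalso
      exact H.irrefl (Subsingleton.elim a b ▸ h)
  · -- 2 ≤ k
    have hk' : 2 ≤ k := hk2'
    set b := k * (k - 1) / 2 with hbdef
    set L := Nat.size n with hLdef
    have hL1 : 1 ≤ L := Nat.size_pos.mpr (by omega)
    have hnL : n ≤ 2 ^ L := le_of_lt (Nat.lt_size_self n)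
    set T₁ := 2 ^ b * (L * k + 1) with hT₁
    have hT₁pos : T₁ ≠ 0 := by positivity
    obtain ⟨t, htp, ht1, ht2⟩ := Nat.exists_prime_lt_and_le_two_mul T₁ hT₁pos
    haveI : NeZero t := ⟨htp.ne_zero⟩
    haveI := Fact.mk htp
    have h2b_nat : 1 ≤ 2 ^ b := Nat.one_le_two_pow
    have hkt : k < t := by
      have hx : k + 1 ≤ L * k + 1 := by nlinarith [hL1]
      have h2 : L * k + 1 ≤ T₁ := by
        rw [hT₁]
        exact Nat.le_mul_of_pos_left _ (by omega)
      omega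
    have htb : (L * (k * t) + 1) * 2 ^ b ≤ t * t := by
      have h1 : 2 ^ b * (L * k) + 2 ^ b + 1 ≤ t := by
        have hTT : T₁ = 2 ^ b * (L * k) + 2 ^ b := by rw [hT₁]; ring
        omega
      calc (L * (k * t) + 1) * 2 ^ b = (2 ^ b * (L * k)) * t + 2 ^ b := by ring
        _ ≤ (2 ^ b * (L * k)) * t + 2 ^ b * t := by
            have ht0 : 1 ≤ t := htp.one_lt.le
            nlinarith [h2b_nat, ht0]
        _ = t * (2 ^ b * (L * k) + 2 ^ b) := by ring
        _ ≤ t * t := Nat.mul_le_mul_left t (by omega)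
    have e : V ≃ Fin k := Fintype.equivFinOfCardEq hcard
    obtain ⟨G, hG⟩ := construction_main n k t hkt V H e hk' L hnL htb
    refine ⟨G, ?_⟩
    intro W hW
    have hmnat : k * t ≤ 4 * 2 ^ b * k ^ 2 * L := by
      calc k * t ≤ k * (2 * T₁) := Nat.mul_le_mul_left k ht2
        _ = 2 * 2 ^ b * (L * k ^ 2 + k) := by rw [hT₁]; ring
        _ ≤ 2 * 2 ^ b * (L * k ^ 2 + L * k ^ 2) := by
            have hkk : k ≤ L * k ^ 2 := by nlinarith [hL1, hk']
            have := Nat.add_le_add_left hkk (L * k ^ 2)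
            exact Nat.mul_le_mul_left _ this
        _ = 4 * 2 ^ b * k ^ 2 * L := by ring
    have hL4 : (L:ℝ) ≤ 4 * Real.log n := size_le_log n hn2
    have hreal : ((k * t : ℕ) : ℝ) ≤ 100 * (k : ℝ) ^ 2 * 2 ^ b * Real.log n := by
      have h1 : ((k * t : ℕ) : ℝ) ≤ 4 * 2 ^ b * (k:ℝ) ^ 2 * (L:ℝ) := by
        exact_mod_cast hmnat
      calc ((k * t : ℕ) : ℝ) ≤ 4 * 2 ^ b * (k:ℝ) ^ 2 * (L:ℝ) := h1
        _ ≤ 4 * 2 ^ b * (k:ℝ) ^ 2 * (4 * Real.log n) :=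
            mul_le_mul_of_nonneg_left hL4 (by positivity)
        _ = 16 * 2 ^ b * (k:ℝ) ^ 2 * Real.log n := by ring
        _ ≤ 100 * (k:ℝ) ^ 2 * 2 ^ b * Real.log n := by
            have hfac : (0:ℝ) ≤ 2 ^ b * (k:ℝ) ^ 2 * Real.log n := by positivity
            nlinarith [hfac]
    have hWge : k * t ≤ W.card := by
      have hchain := le_trans hreal hW
      exact_mod_cast hchain
    obtain ⟨W', hsub', hcard'⟩ := Finset.exists_subset_card_eq hWge
    obtain ⟨f, hf⟩ := hG W' hcard'
    exact ⟨f, fun v => hsub' (hf v)⟩
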